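/- Let X be a topological space. The space C(X) of continuous real-valued functions on X, equipped with the graph topology τ_Γ and with pointwise addition, is a topological group. -/

import Mathlib

open TopologicalSpace Set Topology

/-- The graph of a continuous map, as a subset of `X × Y`. -/
def graphSet {X Y : Type*} [TopologicalSpace X] [TopologicalSpace Y] (f : C(X, Y)) :
    Set (X × Y) := {p | p.2 = f p.1}

/-- The graph topology `τ_Γ` on `C(X, Y)`, generated by the sets
`F_G = {f | graph f ⊆ G}` for `G` open in `X × Y`. -/
def graphTopology (X Y : Type*) [TopologicalSpace X] [TopologicalSpace Y] :
    TopologicalSpace C(X, Y) :=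
  generateFrom {S | ∃ G : Set (X × Y), IsOpen G ∧ S = {f : C(X, Y) | graphSet f ⊆ G}}

section Aux

variable {X : Type*} [TopologicalSpace X]

lemma graphSet_subset_iff {G : Set (X × ℝ)} {f : C(X, ℝ)} :
    graphSet f ⊆ G ↔ ∀ x : X, (x, f x) ∈ G := by
  constructor
  · intro h x
    exact h (show ((x, f x) : X × ℝ).2 = f (x, f x).1 from rfl)
  · rintro h ⟨x, t⟩ ht
    simp only [graphSet, mem_setOf_eq] at ht
    rw [show ((x, t) : X × ℝ) = (x, f x) by rw [ht]]
    exact h x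

lemma isOpen_FG {G : Set (X × ℝ)} (hG : IsOpen G) :
    IsOpen[graphTopology X ℝ] {f : C(X, ℝ) | graphSet f ⊆ G} :=
  isOpen_generateFrom_of_mem ⟨G, hG, rfl⟩

/-- Right translation is continuous for the graph topology. -/
lemma continuous_add_right_graph (h : C(X, ℝ)) :
    Continuous[graphTopology X ℝ, graphTopology X ℝ] (fun f : C(X, ℝ) => f + h) := by
  rw [show graphTopology X ℝ = generateFrom
      {S | ∃ G : Set (X × ℝ), IsOpen G ∧ S = {f : C(X, ℝ) | graphSet f ⊆ G}} from rfl,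
    continuous_generateFrom_iff]
  rintro S ⟨G, hG, rfl⟩
  have hφ : Continuous (fun p : X × ℝ => ((p.1, p.2 + h p.1) : X × ℝ)) := by fun_prop
  have : (fun f : C(X, ℝ) => f + h) ⁻¹' {f : C(X, ℝ) | graphSet f ⊆ G} =
      {f : C(X, ℝ) | graphSet f ⊆ (fun p : X × ℝ => ((p.1, p.2 + h p.1) : X × ℝ)) ⁻¹' G} := by
    ext f
    simp only [mem_preimage, mem_setOf_eq, graphSet_subset_iff, ContinuousMap.add_apply]
  rw [this]
  exact isOpen_FG (hG.preimage hφ)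

/-- Negation is continuous for the graph topology. -/
lemma continuous_neg_graph :
    Continuous[graphTopology X ℝ, graphTopology X ℝ] (fun f : C(X, ℝ) => -f) := by
  rw [show graphTopology X ℝ = generateFrom
      {S | ∃ G : Set (X × ℝ), IsOpen G ∧ S = {f : C(X, ℝ) | graphSet f ⊆ G}} from rfl,
    continuous_generateFrom_iff]
  rintro S ⟨G, hG, rfl⟩
  have hφ : Continuous (fun p : X × ℝ => ((p.1, -p.2) : X × ℝ)) := by fun_prop
  have : (fun f : C(X, ℝ) => -f) ⁻¹' {f : C(X, ℝ) | graphSet f ⊆ G} =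
      {f : C(X, ℝ) | graphSet f ⊆ (fun p : X × ℝ => ((p.1, -p.2) : X × ℝ)) ⁻¹' G} := by
    ext f
    simp only [mem_preimage, mem_setOf_eq, graphSet_subset_iff, ContinuousMap.neg_apply]
  rw [this]
  exact isOpen_FG (hG.preimage hφ)

/-- The key open set used for continuity of addition at `(0,0)`. -/
lemma key_tube {G : Set (X × ℝ)} (hG : IsOpen G) (h0 : ∀ x : X, ((x, (0 : ℝ)) : X × ℝ) ∈ G) :
    ∃ U : Set (X × ℝ), IsOpen U ∧ (∀ x : X, ((x, (0 : ℝ)) : X × ℝ) ∈ U) ∧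
      ∀ x : X, ∀ s t : ℝ, ((x, s) : X × ℝ) ∈ U → ((x, t) : X × ℝ) ∈ U →
        ((x, s + t) : X × ℝ) ∈ G := by
  refine ⟨{p : X × ℝ | ∃ b : ℝ, 2 * |p.2| < b ∧ ∀ r : ℝ, |r| ≤ b → ((p.1, r) : X × ℝ) ∈ G},
    ?_, ?_, ?_⟩
  · -- openness
    rw [isOpen_iff_forall_mem_open]
    rintro ⟨x, s⟩ ⟨b, hb, hball⟩
    have hcomp : ({x} : Set X) ×ˢ Icc (-b) b ⊆ G := by
      rintro ⟨y, r⟩ ⟨hy, hr⟩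
      rw [mem_singleton_iff] at hy
      subst hy
      exact hball r (abs_le.2 hr)
    obtain ⟨u, v, hu, hv, hxu, hIv, huv⟩ :=
      generalized_tube_lemma isCompact_singleton isCompact_Icc hG hcomp
    refine ⟨u ×ˢ Metric.ball s ((b - 2 * |s|) / 2), ?_, ?_, ?_⟩
    · rintro ⟨y, s'⟩ ⟨hyu, hs'⟩
      simp only [Metric.mem_ball, Real.dist_eq] at hs'
      refine ⟨b, ?_, ?_⟩
      · have : |s'| ≤ |s| + |s' - s| := by
          calc |s'| = |s + (s' - s)| := by ring_nf
          _ ≤ |s| + |s' - s| := abs_add_le _ _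
        nlinarith [abs_nonneg (s' - s)]
      · intro r hr
        exact huv ⟨hyu, hIv ⟨(abs_le.1 hr).1, (abs_le.1 hr).2⟩⟩
    · exact hu.prod Metric.isOpen_ball
    · exact ⟨hxu rfl, by simp only [Metric.mem_ball, Real.dist_eq, sub_self, abs_zero]; linarith⟩
  · -- contains the zero graph
    intro x
    obtain ⟨u, v, hu, hv, hxu, h0v, huvG⟩ := isOpen_prod_iff.1 hG x 0 (h0 x)
    obtain ⟨ε, hε, hball⟩ := Metric.isOpen_iff.1 hv 0 h0v
    refine ⟨ε / 2, by simpa using (by linarith : (0:ℝ) < ε / 2), fun r hr => ?_⟩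
    refine huvG ⟨hxu, hball ?_⟩
    simp only [Metric.mem_ball, Real.dist_eq, sub_zero]
    linarith
  · -- additivity
    rintro x s t ⟨a, ha, haG⟩ ⟨b, hb, hbG⟩
    rcases le_total (|s|) (|t|) with hst | hst
    · refine hbG (s + t) ?_
      calc |s + t| ≤ |s| + |t| := abs_add_le _ _
        _ ≤ 2 * |t| := by linarith
        _ ≤ b := le_of_lt hb
    · refine haG (s + t) ?_
      calc |s + t| ≤ |s| + |t| := abs_add_le _ _
        _ ≤ 2 * |s| := by linarith
        _ ≤ a := le_of_lt ha

end Aux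

/-- `(C(X), τ_Γ)` with pointwise addition is a topological group. -/
lemma tendsto_add_zero_graph {X : Type*} [TopologicalSpace X] :
    Filter.Tendsto (fun p : C(X, ℝ) × C(X, ℝ) => p.1 + p.2)
      (@nhds _ (@instTopologicalSpaceProd _ _ (graphTopology X ℝ) (graphTopology X ℝ)) (0, 0))
      (@nhds _ (graphTopology X ℝ) 0) := by
  letI τ : TopologicalSpace C(X, ℝ) := graphTopology X ℝ
  rw [show (graphTopology X ℝ) = generateFrom
      {S | ∃ G : Set (X × ℝ), IsOpen G ∧ S = {f : C(X, ℝ) | graphSet f ⊆ G}} from rfl,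
    tendsto_nhds_generateFrom_iff]
  rintro S ⟨G, hG, rfl⟩ h0
  simp only [mem_setOf_eq, graphSet_subset_iff, ContinuousMap.zero_apply] at h0
  obtain ⟨U, hUopen, hU0, hUadd⟩ := key_tube hG h0
  have hFU : IsOpen[graphTopology X ℝ] {f : C(X, ℝ) | graphSet f ⊆ U} := isOpen_FG hUopen
  have hmem : {f : C(X, ℝ) | graphSet f ⊆ U} ∈ @nhds _ (graphTopology X ℝ) (0 : C(X, ℝ)) :=
    hFU.mem_nhds (by
      simp only [mem_setOf_eq, graphSet_subset_iff, ContinuousMap.zero_apply]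
      exact hU0)
  have hprod : {f : C(X, ℝ) | graphSet f ⊆ U} ×ˢ {f : C(X, ℝ) | graphSet f ⊆ U} ∈
      @nhds _ (@instTopologicalSpaceProd _ _ (graphTopology X ℝ) (graphTopology X ℝ))
        ((0 : C(X, ℝ)), (0 : C(X, ℝ))) := prod_mem_nhds hmem hmem
  refine Filter.mem_of_superset hprod ?_
  rintro ⟨f, g⟩ ⟨hf, hg⟩
  simp only [mem_preimage, mem_setOf_eq, graphSet_subset_iff, ContinuousMap.add_apply] at *
  intro x
  exact hUadd x (f x) (g x) (hf x) (hg x)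

/-- `(C(X), τ_Γ)` with pointwise addition is a topological group. -/
theorem topologicalAddGroup_graphTopology (X : Type*) [TopologicalSpace X] :
    @IsTopologicalAddGroup C(X, ℝ) (graphTopology X ℝ) _ := by
  letI τ : TopologicalSpace C(X, ℝ) := graphTopology X ℝ
  refine @IsTopologicalAddGroup.mk _ τ _ ⟨?_⟩ ⟨?_⟩
  · -- continuous_add
    rw [continuous_iff_continuousAt]
    rintro ⟨f, g⟩
    have key : (fun p : C(X, ℝ) × C(X, ℝ) => p.1 + p.2) =
        (fun h : C(X, ℝ) => h + (f + g)) ∘ (fun p : C(X, ℝ) × C(X, ℝ) => p.1 + p.2) ∘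
          (fun p : C(X, ℝ) × C(X, ℝ) => (p.1 + -f, p.2 + -g)) := by
      funext p
      simp only [Function.comp_apply]
      abel
    rw [key]
    have h1 : Continuous[@instTopologicalSpaceProd _ _ τ τ, @instTopologicalSpaceProd _ _ τ τ]
        (fun p : C(X, ℝ) × C(X, ℝ) => (p.1 + -f, p.2 + -g)) :=
      Continuous.prodMk ((continuous_add_right_graph (-f)).comp continuous_fst)
        ((continuous_add_right_graph (-g)).comp continuous_snd)
    have h2 := @tendsto_add_zero_graph X _
    have h3 := continuous_add_right_graph (X := X) (f + g)
    refine ContinuousAt.comp (h3.continuousAt) ?_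
    refine ContinuousAt.comp ?_ h1.continuousAt
    have heq : ((((f, g).1 + -f : C(X, ℝ)), ((f, g).2 + -g : C(X, ℝ)))) =
        ((0 : C(X, ℝ)), (0 : C(X, ℝ))) := by
      simp only [Prod.mk.injEq]
      constructor <;> abel
    rw [heq]
    show Filter.Tendsto (fun p : C(X, ℝ) × C(X, ℝ) => p.1 + p.2) (𝓝 (0, 0))
      (𝓝 ((0 : C(X, ℝ)) + 0))
    rw [add_zero]
    exact h2
  · -- continuous_neg
    exact continuous_neg_graph
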